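/- Let n ≥ 1, let c₁, …, c_n > 0 and ℓ₁, …, ℓ_n > 0, and let φ₁, …, φ_n : ℝ → ℝ satisfy the gluing relations φ_{i+1}(z) = φᵢ(ℓᵢ + τᵢ - (cᵢ/c_{i+1})τ_{i+1} + (cᵢ/c_{i+1}) z) for all z ∈ ℝ and 1 ≤ i ≤ n-1, together with the closing relation φ₁(z) = φ_n(ℓ_n + τ_n - (c_n/c₁)τ₁ + (c_n/c₁) z) for all z ∈ ℝ (indices taken along a directed circuit). Then φ₁ is periodic with period P = Σ_{i=1}^{n} (c₁/cᵢ) ℓᵢ, i.e. φ₁(z) = φ₁(z + P) for all z ∈ ℝ. In particular, since P > 0, if φ₁ has a limit at +∞ and at -∞ and at most one local extremum (is solitary) and is nonconstant, a contradiction follows: any such travelling-wave profile on a directed circuit must be periodic, so no nonconstant solitary wave exists. -/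

import Mathlib

open Real Filter Finset

theorem directed_circuit_forces_periodicity (n : ℕ) (hn : 1 ≤ n)
    (c ℓ τ : ℕ → ℝ) (hc : ∀ i ∈ Icc 1 n, 0 < c i) (hℓ : ∀ i ∈ Icc 1 n, 0 < ℓ i)
    (φ : ℕ → ℝ → ℝ)
    (hglue : ∀ i, 1 ≤ i → i ≤ n - 1 → ∀ z : ℝ,
      φ (i + 1) z = φ i (ℓ i + τ i - (c i / c (i + 1)) * τ (i + 1) + (c i / c (i + 1)) * z))
    (hclose : ∀ z : ℝ, φ 1 z = φ n (ℓ n + τ n - (c n / c 1) * τ 1 + (c n / c 1) * z)) :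
    let P : ℝ := ∑ i ∈ Icc 1 n, (c 1 / c i) * ℓ i
    (∀ z : ℝ, φ 1 z = φ 1 (z + P)) ∧ 0 < P ∧
      (∀ l L : ℝ, Tendsto (φ 1) atTop (nhds l) → Tendsto (φ 1) atBot (nhds L) →
        ∀ z w : ℝ, φ 1 z = φ 1 w) := by
  intro P
  have hc1 : c 1 ≠ 0 := ne_of_gt (hc 1 (by simp [Finset.mem_Icc]; omega))
  have hcn : c n ≠ 0 := ne_of_gt (hc n (by simp [Finset.mem_Icc]; omega))
  have key : ∀ k, k ≤ n - 1 → ∀ z : ℝ,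
      φ (k + 1) z = φ 1 ((∑ i ∈ Icc 1 k, (c 1 / c i) * ℓ i) + τ 1
        + (c 1 / c (k + 1)) * (z - τ (k + 1))) := by
    intro k
    induction k with
    | zero =>
      intro _ z
      rw [show Icc 1 0 = (∅ : Finset ℕ) from Finset.Icc_eq_empty (by omega)]
      simp only [Finset.sum_empty]
      congr 1
      field_simp
      ring
    | succ k ih =>
      intro hk z
      have hck : c (k + 1) ≠ 0 := ne_of_gt (hc (k + 1) (by simp [Finset.mem_Icc]; omega))
      have hck2 : c (k + 2) ≠ 0 := ne_of_gt (hc (k + 2) (by simp [Finset.mem_Icc]; omega))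
      rw [hglue (k + 1) (by omega) (by omega) z, ih (by omega)]
      rw [Finset.sum_Icc_succ_top (by omega : 1 ≤ k + 1)]
      congr 1
      field_simp
      ring
  have hper : ∀ z : ℝ, φ 1 z = φ 1 (z + P) := by
    intro z
    rw [hclose z]
    have hn' : n - 1 + 1 = n := by omega
    have := key (n - 1) le_rfl (ℓ n + τ n - (c n / c 1) * τ 1 + (c n / c 1) * z)
    rw [hn'] at this
    rw [this]
    congr 1
    have : P = (∑ i ∈ Icc 1 (n - 1), (c 1 / c i) * ℓ i) + (c 1 / c n) * ℓ n := by
      have := Finset.sum_Icc_succ_top (by omega : 1 ≤ n - 1 + 1)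
        (f := fun i => (c 1 / c i) * ℓ i)
      rw [hn'] at this
      simpa [P] using this
    rw [this]
    field_simp
    ring
  have hP : 0 < P := by
    apply Finset.sum_pos
    · intro i hi
      exact mul_pos (div_pos (hc 1 (by simp [Finset.mem_Icc]; omega)) (hc i hi)) (hℓ i hi)
    · exact Finset.nonempty_Icc.mpr hn
  refine ⟨hper, hP, ?_⟩
  intro l L hl _ z w
  have hconst : ∀ z : ℝ, φ 1 z = l := by
    intro z
    have hseq : ∀ k : ℕ, φ 1 (z + k * P) = φ 1 z := by
      intro k
      induction k with
      | zero => simp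
      | succ k ih =>
        have : z + (k + 1 : ℕ) * P = (z + k * P) + P := by push_cast; ring
        rw [this, ← hper (z + k * P), ih]
    have htend : Tendsto (fun k : ℕ => z + k * P) atTop atTop := by
      apply tendsto_atTop_add_const_left
      exact Tendsto.atTop_mul_const hP tendsto_natCast_atTop_atTop
    have h1 : Tendsto (fun k : ℕ => φ 1 (z + k * P)) atTop (nhds l) := hl.comp htend
    have h2 : Tendsto (fun k : ℕ => φ 1 (z + k * P)) atTop (nhds (φ 1 z)) := by
      simp only [hseq]; exact tendsto_const_nhds
    exact tendsto_nhds_unique h2 h1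
  rw [hconst z, hconst w]
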